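/- Let M ≥ 2 be an integer and define H_M(z1, …, zM) = (∏_{j=1}^M (1 − zj)) · (3 e^{∑_{j=1}^M zj} + 1). Then H_M(z1, …, zM) ≥ 4 for all (z1, …, zM) ∈ [−3, 0]^M. -/

import Mathlib

open Finset in
/-- Bernoulli-type: `∏ (1 + a j) ≥ 1 + ∑ a j` for nonneg `a`. -/
lemma aux_one_add_sum_le_prod {ι : Type*} (s : Finset ι) (a : ι → ℝ)
    (ha : ∀ i ∈ s, 0 ≤ a i) : 1 + ∑ i ∈ s, a i ≤ ∏ i ∈ s, (1 + a i) := by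
  classical
  induction s using Finset.cons_induction with
  | empty => simp
  | cons x t hx ih =>
    rw [Finset.sum_cons, Finset.prod_cons]
    have hax : 0 ≤ a x := ha x (Finset.mem_cons_self _ _)
    have hsum : 0 ≤ ∑ i ∈ t, a i :=
      Finset.sum_nonneg fun i hi => ha i (Finset.mem_cons_of_mem hi)
    have ih' := ih fun i hi => ha i (Finset.mem_cons_of_mem hi)
    nlinarith [ih', hax, hsum]

/-- `3(1+t) - (3-t)e^t` has nonneg derivative `3 - (2-t)e^t ≥ 3 - e > 0`. -/
lemma aux_key (t : ℝ) (ht : 0 ≤ t) : (3 - t) * Real.exp t ≤ 3 * (1 + t) := by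
  set f : ℝ → ℝ := fun t => 3 * (1 + t) - (3 - t) * Real.exp t with hf
  have hmono : Monotone f := by
    have hderiv : ∀ x : ℝ, HasDerivAt f (3 - (2 - x) * Real.exp x) x := by
      intro x
      have h1 : HasDerivAt (fun x : ℝ => 3 * (1 + x)) 3 x := by
        simpa using ((hasDerivAt_id x).const_add 1).const_mul 3
      have h2 : HasDerivAt (fun x : ℝ => (3 - x) * Real.exp x)
          ((-1) * Real.exp x + (3 - x) * Real.exp x) x :=
        ((hasDerivAt_id x).const_sub 3).mul (Real.hasDerivAt_exp x)
      have : HasDerivAt f (3 - ((-1) * Real.exp x + (3 - x) * Real.exp x)) x := h1.sub h2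
      convert this using 1
      ring
    have hnn : ∀ x : ℝ, 0 ≤ 3 - (2 - x) * Real.exp x := by
      intro x
      have h1 : (2 - x) ≤ Real.exp (1 - x) := by
        have := Real.add_one_le_exp (1 - x)
        linarith
      have h2 : (2 - x) * Real.exp x ≤ Real.exp (1 - x) * Real.exp x :=
        mul_le_mul_of_nonneg_right h1 (Real.exp_pos x).le
      rw [← Real.exp_add] at h2
      have h3 : Real.exp (1 - x + x) = Real.exp 1 := by norm_num
      have h4 : Real.exp 1 < 3 := by
        have := Real.exp_one_lt_d9
        linarith
      rw [h3] at h2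
      linarith
    exact monotone_of_deriv_nonneg
      (fun x => (hderiv x).differentiableAt)
      (fun x => by rw [(hderiv x).deriv]; exact hnn x)
  have h0 : f 0 = 0 := by simp [hf]
  have := hmono ht
  rw [h0] at this
  simp only [hf] at this
  linarith

/-- One-variable bound: `(1-s)(3e^s + 1) ≥ 4` for `s ≤ 0`. -/
lemma aux_one_var (s : ℝ) (hs : s ≤ 0) : 4 ≤ (1 - s) * (3 * Real.exp s + 1) := by
  have h := aux_key (-s) (by linarith)
  have hE : 0 < Real.exp s := Real.exp_pos s
  have h2 : (3 + s) * (Real.exp (-s) * Real.exp s) ≤ 3 * (1 - s) * Real.exp s := by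
    have := mul_le_mul_of_nonneg_right h hE.le
    nlinarith
  rw [← Real.exp_add] at h2
  simp only [neg_add_cancel, Real.exp_zero, mul_one] at h2
  nlinarith

open Finset in
/-- Lower bound `H_M ≥ 4` on `[-3,0]^M` for
`H_M(z) = (∏ (1 - zj)) (3 e^{∑ zj} + 1)`. -/
theorem H_M_ge_four_FIE (M : ℕ) (hM : 2 ≤ M) (z : Fin M → ℝ)
    (hz : ∀ j, z j ∈ Set.Icc (-3 : ℝ) 0) :
    4 ≤ (∏ j, (1 - z j)) * (3 * Real.exp (∑ j, z j) + 1) := by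
  set s := ∑ j, z j with hsdef
  have hs : s ≤ 0 := Finset.sum_nonpos fun j _ => (hz j).2
  have hprod : 1 - s ≤ ∏ j, (1 - z j) := by
    have := aux_one_add_sum_le_prod Finset.univ (fun j => -z j)
      (fun j _ => by linarith [(hz j).2])
    simp only [sub_eq_add_neg]
    convert this using 2
    · rw [hsdef, ← Finset.sum_neg_distrib]
  have hE : (0:ℝ) < 3 * Real.exp s + 1 := by positivity
  calc (4:ℝ) ≤ (1 - s) * (3 * Real.exp s + 1) := aux_one_var s hs
    _ ≤ (∏ j, (1 - z j)) * (3 * Real.exp s + 1) :=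
        mul_le_mul_of_nonneg_right hprod hE.le
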